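/- Let N ∈ ℂ^{d×d} be upper Hessenberg and diagonalizable with pairwise distinct eigenvalues λ₁,…,λ_d, say N = X Λ X^{-1} with Λ = diag(λ₁,…,λ_d). Then for every i ∈ {1,…,d}, (e_d^T X e_i) · (e_i^T X^{-1} e₁) = (∏_{j=1}^{d−1} N_{j+1,j}) / ∏_{j≠i} (λ_i − λ_j). -/

import Mathlib

open Matrix Finset

/-- The subdiagonal entries of `N`, as a total function on `ℕ`. -/
noncomputable def subdiag {d : ℕ} (N : Matrix (Fin (d+1)) (Fin (d+1)) ℂ) (m : ℕ) : ℂ :=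
  if hm : m + 1 ≤ d then N ⟨m+1, by omega⟩ ⟨m, by omega⟩ else 0

/-- Product of a list of Hessenberg matrices (agreeing with `N` on the subdiagonal):
vanishing below the `length`-th subdiagonal, and explicit value on it. -/
lemma hess_list_prod {d : ℕ} (N : Matrix (Fin (d+1)) (Fin (d+1)) ℂ)
    (L : List (Matrix (Fin (d+1)) (Fin (d+1)) ℂ))
    (hH : ∀ M ∈ L, ∀ i j : Fin (d+1), (j : ℕ) + 1 < (i : ℕ) → M i j = 0)
    (hS : ∀ M ∈ L, ∀ i j : Fin (d+1), (i : ℕ) = (j : ℕ) + 1 → M i j = N i j) :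
    ∀ i j : Fin (d+1),
      (((j : ℕ) + L.length < (i : ℕ) → L.prod i j = 0) ∧
       ((i : ℕ) = (j : ℕ) + L.length → L.prod i j =
        ∏ k ∈ Finset.range L.length, subdiag N ((j : ℕ) + k))) := by
  induction L with
  | nil =>
    intro i j
    constructor
    · intro h; simp only [List.length_nil, Nat.add_zero] at h
      simp [Matrix.one_apply, Fin.ne_of_val_ne (by omega : (i:ℕ) ≠ (j:ℕ))]
    · intro h; simp only [List.length_nil, Nat.add_zero] at h
      simp [Matrix.one_apply, Fin.eq_of_val_eq h]
  | cons M L ih =>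
    have hH' : ∀ M' ∈ L, ∀ i j : Fin (d+1), (j : ℕ) + 1 < (i : ℕ) → M' i j = 0 :=
      fun M' hM' => hH M' (List.mem_cons_of_mem _ hM')
    have hS' : ∀ M' ∈ L, ∀ i j : Fin (d+1), (i : ℕ) = (j : ℕ) + 1 → M' i j = N i j :=
      fun M' hM' => hS M' (List.mem_cons_of_mem _ hM')
    intro i j
    have hprod : (M :: L).prod = M * L.prod := List.prod_cons
    constructor
    · intro h
      simp only [List.length_cons] at h
      rw [hprod, Matrix.mul_apply]
      apply Finset.sum_eq_zero
      intro k _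
      rcases lt_or_ge ((j : ℕ) + L.length) (k : ℕ) with hk | hk
      · rw [((ih hH' hS' k j).1 hk), mul_zero]
      · rw [hH M (List.mem_cons_self) i k (by omega), zero_mul]
    · intro h
      simp only [List.length_cons] at h ⊢
      have hbound : (j : ℕ) + L.length < d + 1 := by have := i.isLt; omega
      rw [hprod, Matrix.mul_apply]
      rw [Finset.sum_eq_single (⟨(j : ℕ) + L.length, hbound⟩ : Fin (d+1))]
      · rw [hS M (List.mem_cons_self) i _ (by simp; omega),
          (ih hH' hS' _ j).2 (by simp), Finset.prod_range_succ, mul_comm]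
        congr 1
        have hle : (j : ℕ) + L.length + 1 ≤ d := by have := i.isLt; omega
        rw [subdiag, dif_pos hle]
        congr 1 <;> exact Fin.ext (by simp; omega)
      · intro k _ hk
        have hk' : (k : ℕ) ≠ (j : ℕ) + L.length := fun hc => hk (Fin.ext (by simpa using hc))
        rcases lt_or_ge ((j : ℕ) + L.length) (k : ℕ) with h1 | h1
        · rw [(ih hH' hS' k j).1 h1, mul_zero]
        · rw [hH M (List.mem_cons_self) i k (by omega), zero_mul]
      · intro hmem; exact absurd (Finset.mem_univ _) hmem

/-- Product of a list of conjugated diagonal matrices. -/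
lemma conj_diag_list_prod {n : ℕ} {ι : Type*} (X : Matrix (Fin n) (Fin n) ℂ)
    (hX : IsUnit X.det) (l : List ι) (f : ι → Fin n → ℂ) :
    (l.map (fun j => X * diagonal (f j) * X⁻¹)).prod
      = X * diagonal (fun k => (l.map (fun j => f j k)).prod) * X⁻¹ := by
  induction l with
  | nil =>
    simp [Matrix.diagonal_one, Matrix.mul_nonsing_inv X hX]
  | cons a l ih =>
    simp only [List.map_cons, List.prod_cons, ih]
    rw [show X * diagonal (f a) * X⁻¹ * (X * diagonal (fun k => (l.map (fun j => f j k)).prod) * X⁻¹)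
        = X * (diagonal (f a) * (X⁻¹ * X) * diagonal (fun k => (l.map (fun j => f j k)).prod)) * X⁻¹ by
      noncomm_ring]
    rw [Matrix.nonsing_inv_mul X hX, mul_one, Matrix.diagonal_mul_diagonal]

/-- For an upper Hessenberg matrix `N = X Λ X⁻¹` that is diagonalizable with
pairwise distinct eigenvalues, the products `α_i β_i = (e_dᵀ X e_i)(e_iᵀ X⁻¹ e₁)`
satisfy `α_i β_i = (∏_j N_{j+1,j}) / ∏_{j ≠ i} (λ_i - λ_j)`.
(The paper's `d` is written as `d+1`.) -/
theorem hessenberg_eigenvector_coefficients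
    {d : ℕ}
    (N : Matrix (Fin (d + 1)) (Fin (d + 1)) ℂ)
    (hHess : ∀ i j : Fin (d + 1), (j : ℕ) + 1 < (i : ℕ) → N i j = 0)
    (Xe : Matrix (Fin (d + 1)) (Fin (d + 1)) ℂ) (Λ : Fin (d + 1) → ℂ)
    (hXe : IsUnit Xe.det)
    (hdiag : N = Xe * diagonal Λ * Xe⁻¹)
    (hdistinct : Function.Injective Λ) :
    ∀ i : Fin (d + 1),
      Xe (Fin.last d) i * Xe⁻¹ i 0 =
        (∏ j : Fin d, N j.succ j.castSucc) / ∏ j ∈ univ.erase i, (Λ i - Λ j) := by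
  intro i
  set l : List (Fin (d+1)) := (univ.erase i).toList with hl
  have hlen : l.length = d := by
    rw [hl, Finset.length_toList, Finset.card_erase_of_mem (Finset.mem_univ i)]
    simp
  set P : Matrix (Fin (d+1)) (Fin (d+1)) ℂ := (l.map (fun j => N - Λ j • 1)).prod with hP
  -- each factor written as a conjugated diagonal
  have hfact : ∀ j : Fin (d+1), N - Λ j • 1 = Xe * diagonal (fun k => Λ k - Λ j) * Xe⁻¹ := by
    intro j
    have : (diagonal (fun k => Λ k - Λ j) : Matrix (Fin (d+1)) (Fin (d+1)) ℂ)
        = diagonal Λ - Λ j • 1 := by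
      ext a b
      by_cases hab : a = b
      · subst hab; simp [Matrix.one_apply]
      · simp [Matrix.diagonal_apply_ne _ hab, Matrix.one_apply_ne hab]
    rw [this, Matrix.mul_sub, Matrix.sub_mul, ← hdiag, Matrix.mul_smul, Matrix.smul_mul,
      mul_one, Matrix.mul_nonsing_inv Xe hXe]
  -- compute P as a conjugated diagonal
  have hP2 : P = Xe * diagonal (fun k => ∏ j ∈ univ.erase i, (Λ k - Λ j)) * Xe⁻¹ := by
    rw [hP]
    have : (l.map (fun j => N - Λ j • 1))
        = l.map (fun j => Xe * diagonal (fun k => Λ k - Λ j) * Xe⁻¹) := by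
      apply List.map_congr_left; intro j _; exact hfact j
    rw [this, conj_diag_list_prod Xe hXe l (fun j k => Λ k - Λ j)]
    have h2 : (fun k => (l.map (fun j => Λ k - Λ j)).prod)
        = fun k => ∏ j ∈ univ.erase i, (Λ k - Λ j) := by
      funext k; rw [hl]; exact Finset.prod_map_toList _ _
    rw [h2]
  -- the diagonal function is supported at i
  set c : ℂ := ∏ j ∈ univ.erase i, (Λ i - Λ j) with hc
  have hdiagfun : (fun k => ∏ j ∈ univ.erase i, (Λ k - Λ j)) = fun k => if k = i then c else 0 := by
    funext k
    by_cases hk : k = i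
    · simp [hk, hc]
    · rw [if_neg hk]
      exact Finset.prod_eq_zero (Finset.mem_erase.2 ⟨hk, Finset.mem_univ k⟩) (by ring)
  -- entry (last, 0) of P, computed via eigen-decomposition
  have hPval : P (Fin.last d) 0 = Xe (Fin.last d) i * c * Xe⁻¹ i 0 := by
    rw [hP2, hdiagfun, Matrix.mul_apply]
    rw [Finset.sum_eq_single i]
    · rw [Matrix.mul_diagonal, if_pos rfl]
    · intro k _ hk
      rw [Matrix.mul_diagonal, if_neg hk, mul_zero, zero_mul]
    · intro hmem; exact absurd (Finset.mem_univ _) hmem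
  -- entry (last, 0) of P, computed via Hessenberg structure
  have hHL : ∀ M ∈ l.map (fun j => N - Λ j • 1), ∀ a b : Fin (d+1),
      (b : ℕ) + 1 < (a : ℕ) → M a b = 0 := by
    intro M hM a b hab
    obtain ⟨j, _, rfl⟩ := List.mem_map.1 hM
    have hne : a ≠ b := Fin.ne_of_val_ne (by omega)
    simp [Matrix.sub_apply, Matrix.smul_apply, Matrix.one_apply_ne hne, hHess a b hab]
  have hSL : ∀ M ∈ l.map (fun j => N - Λ j • 1), ∀ a b : Fin (d+1),
      (a : ℕ) = (b : ℕ) + 1 → M a b = N a b := by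
    intro M hM a b hab
    obtain ⟨j, _, rfl⟩ := List.mem_map.1 hM
    have hne : a ≠ b := Fin.ne_of_val_ne (by omega)
    simp [Matrix.sub_apply, Matrix.smul_apply, Matrix.one_apply_ne hne]
  have hlen2 : (l.map (fun j => N - Λ j • 1)).length = d := by rw [List.length_map, hlen]
  have hPval2 : P (Fin.last d) 0 = ∏ k ∈ Finset.range d, subdiag N k := by
    have := (hess_list_prod N _ hHL hSL (Fin.last d) 0).2 (by simp [hlen2])
    rw [hP, this, hlen2]
    simp
  -- identify the subdiagonal product with the Fin-indexed product
  have hsub : ∏ k ∈ Finset.range d, subdiag N k = ∏ j : Fin d, N j.succ j.castSucc := by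
    rw [← Fin.prod_univ_eq_prod_range (fun k => subdiag N k) d]
    apply Finset.prod_congr rfl
    intro j _
    rw [subdiag, dif_pos (by omega : (j : ℕ) + 1 ≤ d)]
    congr 1 <;> exact Fin.ext (by simp)
  -- c ≠ 0
  have hcne : c ≠ 0 := by
    rw [hc]
    apply Finset.prod_ne_zero_iff.2
    intro j hj
    have : j ≠ i := (Finset.mem_erase.1 hj).1
    exact sub_ne_zero.2 fun hcon => this (hdistinct hcon.symm)
  rw [eq_div_iff hcne, ← hsub, ← hPval2, hPval]
  ring
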